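/- Two possible worlds w_1, w_2 ∈ W_φ, regarded as points of {0,1}^n ⊆ [0,1]^n, lie in the same connected component of the topological subspace C_φ ⊆ ℝ^n if and only if they lie in the same connected component of the prime implicant graph G of φ. In particular, C_φ is a connected topological space if and only if G is a connected graph. -/

import Mathlib

/-- A world is an assignment of Boolean values to `n` variables. -/
abbrev World (n : ℕ) := Fin n → Bool

/-- The independent distribution with parameters `μ`:
`p_μ(w) = ∏ i, μ i ^ (w i) * (1 - μ i) ^ (1 - w i)`. -/
def pInd {n : ℕ} (μ : Fin n → ℝ) (w : World n) : ℝ :=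
  ∏ i, if w i then μ i else 1 - μ i

/-- A partial assignment with domain `D` and values `a` covers the world `w`. -/
def covers {n : ℕ} (D : Set (Fin n)) (a : Fin n → Bool) (w : World n) : Prop :=
  ∀ i ∈ D, w i = a i

/-- The cover of a partial assignment: all worlds agreeing with it on its domain. -/
def coverSet {n : ℕ} (D : Set (Fin n)) (a : Fin n → Bool) : Set (World n) :=
  {w | covers D a w}

/-- A partial assignment is an implicant of `φ` if every world in its cover is possible. -/
def Implicant {n : ℕ} (φ : World n → Bool) (D : Set (Fin n)) (a : Fin n → Bool) : Prop :=
  ∀ w : World n, covers D a w → φ w = true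

/-- A prime implicant: an implicant whose cover is not strictly contained in the cover
of another implicant. -/
def PrimeImplicant {n : ℕ} (φ : World n → Bool) (D : Set (Fin n)) (a : Fin n → Bool) : Prop :=
  Implicant φ D a ∧ ∀ (E : Set (Fin n)) (b : Fin n → Bool),
    Implicant φ E b → ¬ (coverSet D a ⊂ coverSet E b)

/-- The deterministic coordinates of the parameter vector `μ`. -/
def detDom {n : ℕ} (μ : Fin n → ℝ) : Set (Fin n) := {i | μ i = 0 ∨ μ i = 1}

/-- The value assigned by `μ` at a deterministic coordinate. -/
noncomputable def detVal {n : ℕ} (μ : Fin n → ℝ) (i : Fin n) : Bool :=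
  if μ i = 1 then true else false

/-- A distribution over worlds: nonnegative, summing to one. -/
def IsDistribution {n : ℕ} (p : World n → ℝ) : Prop :=
  (∀ w, 0 ≤ p w) ∧ ∑ w, p w = 1

/-- A distribution is possible for `φ` if it vanishes on all impossible worlds. -/
def PossibleDist {n : ℕ} (φ : World n → Bool) (p : World n → ℝ) : Prop :=
  ∀ w, φ w = false → p w = 0

/-- The unit hypercube of parameters. -/
def unitCube (n : ℕ) : Set (Fin n → ℝ) := {μ | ∀ i, μ i ∈ Set.Icc (0:ℝ) 1}

/-- The implicant cube of a partial assignment: coordinates in `D` are fixed,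
the others range over `[0,1]`. -/
def implicantCube {n : ℕ} (D : Set (Fin n)) (a : Fin n → Bool) : Set (Fin n → ℝ) :=
  {μ | (∀ i, μ i ∈ Set.Icc (0:ℝ) 1) ∧ ∀ i ∈ D, μ i = if a i then 1 else 0}

/-- The cubical set of `φ`: the union of the prime implicant cubes. -/
def cubicalSet {n : ℕ} (φ : World n → Bool) : Set (Fin n → ℝ) :=
  ⋃ (D : Set (Fin n)) (a : Fin n → Bool) (_ : PrimeImplicant φ D a), implicantCube D a

/-- The weighted model count `Σ_{w : φ(w)=1} p_μ(w)`. -/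
noncomputable def WMC {n : ℕ} (φ : World n → Bool) (μ : Fin n → ℝ) : ℝ :=
  ∑ w : World n, if φ w then pInd μ w else 0

/-- A world regarded as a point of `[0,1]^n ⊆ ℝ^n`. -/
def worldPoint {n : ℕ} (w : World n) : Fin n → ℝ := fun i => if w i then 1 else 0

/-- An elementary interval is `{0}`, `{1}` or `[0,1]`. -/
def ElemInterval (I : Set ℝ) : Prop := I = {0} ∨ I = {1} ∨ I = Set.Icc 0 1

/-- An elementary cube is a product of elementary intervals. -/
def IsElemCube {n : ℕ} (C : Set (Fin n → ℝ)) : Prop :=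
  ∃ I : Fin n → Set ℝ, (∀ i, ElemInterval (I i)) ∧ C = {x | ∀ i, x i ∈ I i}

/-- The prime implicant graph of `φ`: vertices are the possible worlds, with an edge between
two distinct possible worlds whenever some prime implicant of `φ` covers both. -/
def primeImplicantGraph {n : ℕ} (φ : World n → Bool) :
    SimpleGraph {w : World n // φ w = true} where
  Adj w₁ w₂ := w₁ ≠ w₂ ∧ ∃ (D : Set (Fin n)) (a : Fin n → Bool),
    PrimeImplicant φ D a ∧ covers D a w₁.1 ∧ covers D a w₂.1
  symm := ⟨by
    rintro w₁ w₂ ⟨hne, D, a, hp, h1, h2⟩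
    exact ⟨hne.symm, D, a, hp, h2, h1⟩⟩
  loopless := ⟨by
    intro w h
    exact h.1 rfl⟩

section Aux
open Set

variable {n : ℕ}

lemma worldPoint_mem_cube {D : Set (Fin n)} {a : Fin n → Bool} {w : World n} :
    worldPoint w ∈ implicantCube D a ↔ covers D a w := by
  constructor
  · rintro ⟨-, h2⟩ i hi
    have := h2 i hi
    by_cases hw : w i <;> by_cases ha : a i <;>
      simp [worldPoint, hw, ha] at this ⊢
  · intro h
    refine ⟨fun i => ?_, fun i hi => ?_⟩
    · by_cases hw : w i <;> simp [worldPoint, hw]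
    · simp [worldPoint, h i hi]

lemma cube_convex (D : Set (Fin n)) (a : Fin n → Bool) : Convex ℝ (implicantCube D a) := by
  intro x hx y hy s t hs ht hst
  refine ⟨fun i => ?_, fun i hi => ?_⟩
  · have := (convex_Icc (0:ℝ) 1) (hx.1 i) (hy.1 i) hs ht hst
    simpa using this
  · have h1 := hx.2 i hi
    have h2 := hy.2 i hi
    simp only [Pi.add_apply, Pi.smul_apply, smul_eq_mul, h1, h2]
    rw [← add_mul, hst, one_mul]

lemma cube_closed (D : Set (Fin n)) (a : Fin n → Bool) : IsClosed (implicantCube D a) := by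
  have h1 : IsClosed {μ : Fin n → ℝ | ∀ i, μ i ∈ Icc (0:ℝ) 1} := by
    have e : {μ : Fin n → ℝ | ∀ i, μ i ∈ Icc (0:ℝ) 1}
        = ⋂ i, (fun μ : Fin n → ℝ => μ i) ⁻¹' Icc 0 1 := by ext; simp
    rw [e]; exact isClosed_iInter fun i => isClosed_Icc.preimage (continuous_apply i)
  have h2 : IsClosed {μ : Fin n → ℝ | ∀ i ∈ D, μ i = if a i then 1 else 0} := by
    have e : {μ : Fin n → ℝ | ∀ i ∈ D, μ i = if a i then 1 else 0}
        = ⋂ i ∈ D, {μ : Fin n → ℝ | μ i = if a i then 1 else 0} := by ext; simp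
    rw [e]
    exact isClosed_biInter fun i _ => isClosed_eq (continuous_apply i) continuous_const
  exact h1.inter h2

lemma implicant_subset_prime {φ : World n → Bool} {D : Set (Fin n)} {a : Fin n → Bool}
    (h : Implicant φ D a) :
    ∃ E b, PrimeImplicant φ E b ∧ coverSet D a ⊆ coverSet E b := by
  classical
  set S : Set (Set (Fin n) × (Fin n → Bool)) :=
    {q | Implicant φ q.1 q.2 ∧ coverSet D a ⊆ coverSet q.1 q.2} with hS
  obtain ⟨q, hqS, hmax⟩ := Set.Finite.exists_maximalFor
    (fun q : Set (Fin n) × (Fin n → Bool) => (coverSet q.1 q.2).ncard) S (Set.toFinite S)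
    ⟨(D, a), h, subset_rfl⟩
  refine ⟨q.1, q.2, ⟨hqS.1, ?_⟩, hqS.2⟩
  intro E b hEb hss
  have hmem : (E, b) ∈ S := ⟨hEb, hqS.2.trans hss.subset⟩
  have hle : (coverSet q.1 q.2).ncard ≤ (coverSet E b).ncard :=
    Set.ncard_le_ncard hss.subset (Set.toFinite _)
  have heq := hmax hmem hle
  have hlt : (coverSet q.1 q.2).ncard < (coverSet E b).ncard :=
    Set.ncard_lt_ncard hss (Set.toFinite _)
  exact absurd heq (not_le.2 hlt)

lemma exists_prime_covering {φ : World n → Bool} {w : World n} (h : φ w = true) :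
    ∃ D a, PrimeImplicant φ D a ∧ covers D a w := by
  have himp : Implicant φ Set.univ w := by
    intro w' hw'
    have : w' = w := funext fun i => hw' i (mem_univ i)
    rwa [this]
  obtain ⟨E, b, hp, hsub⟩ := implicant_subset_prime himp
  exact ⟨E, b, hp, hsub (fun i _ => rfl)⟩

end Aux

section Aux2
open Set

variable {n : ℕ}

lemma cube_subset_cubicalSet {φ : World n → Bool} {D : Set (Fin n)} {a : Fin n → Bool}
    (hp : PrimeImplicant φ D a) : implicantCube D a ⊆ cubicalSet φ := by
  intro μ hμ
  simp only [cubicalSet, Set.mem_iUnion]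
  exact ⟨D, a, hp, hμ⟩

lemma reachable_of_common_prime {φ : World n → Bool} {D : Set (Fin n)} {a : Fin n → Bool}
    (hp : PrimeImplicant φ D a) {w₁ w₂ : World n} (h₁ : φ w₁ = true) (h₂ : φ w₂ = true)
    (c1 : covers D a w₁) (c2 : covers D a w₂) :
    (primeImplicantGraph φ).Reachable ⟨w₁, h₁⟩ ⟨w₂, h₂⟩ := by
  by_cases h : w₁ = w₂
  · subst h
    rfl
  · exact SimpleGraph.Adj.reachable
      ⟨fun hc => h (congrArg Subtype.val hc), D, a, hp, c1, c2⟩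

lemma sameComponent_of_common_prime {φ : World n → Bool} {D : Set (Fin n)} {a : Fin n → Bool}
    (hp : PrimeImplicant φ D a) {w₁ w₂ : World n}
    (c1 : covers D a w₁) (c2 : covers D a w₂) :
    connectedComponentIn (cubicalSet φ) (worldPoint w₁) =
      connectedComponentIn (cubicalSet φ) (worldPoint w₂) := by
  have hconn := (cube_convex D a).isPreconnected
  have hsub := hconn.subset_connectedComponentIn (worldPoint_mem_cube.2 c1)
    (cube_subset_cubicalSet hp)
  exact connectedComponentIn_eq (hsub (worldPoint_mem_cube.2 c2))

/-- Topological implication of graph reachability. -/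
lemma comp_eq_of_reachable {φ : World n → Bool} {w₁ w₂ : World n}
    {h₁ : φ w₁ = true} {h₂ : φ w₂ = true}
    (h : (primeImplicantGraph φ).Reachable ⟨w₁, h₁⟩ ⟨w₂, h₂⟩) :
    connectedComponentIn (cubicalSet φ) (worldPoint w₁) =
      connectedComponentIn (cubicalSet φ) (worldPoint w₂) := by
  obtain ⟨p⟩ := h
  have key : ∀ (u v : {w : World n // φ w = true})
      (q : (primeImplicantGraph φ).Walk u v),
      connectedComponentIn (cubicalSet φ) (worldPoint u.1) =
        connectedComponentIn (cubicalSet φ) (worldPoint v.1) := by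
    intro u v q
    induction q with
    | nil => rfl
    | cons h q ih =>
      obtain ⟨-, D, a, hp, c1, c2⟩ := h
      exact (sameComponent_of_common_prime hp c1 c2).trans ih
  exact key _ _ p

/-- Graph implication of topological connectivity. -/
lemma reachable_of_comp_eq {φ : World n → Bool} {w₁ w₂ : World n}
    (h₁ : φ w₁ = true) (h₂ : φ w₂ = true)
    (h : connectedComponentIn (cubicalSet φ) (worldPoint w₁) =
      connectedComponentIn (cubicalSet φ) (worldPoint w₂)) :
    (primeImplicantGraph φ).Reachable ⟨w₁, h₁⟩ ⟨w₂, h₂⟩ := by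
  classical
  -- The set of primes one of whose covered worlds is reachable to w₁
  set Good : Set (Set (Fin n) × (Fin n → Bool)) :=
    {q | PrimeImplicant φ q.1 q.2 ∧ ∃ (u : World n) (hu : φ u = true),
      covers q.1 q.2 u ∧ (primeImplicantGraph φ).Reachable ⟨u, hu⟩ ⟨w₁, h₁⟩} with hGood
  set Bad : Set (Set (Fin n) × (Fin n → Bool)) :=
    {q | PrimeImplicant φ q.1 q.2 ∧ ¬ ∃ (u : World n) (hu : φ u = true),
      covers q.1 q.2 u ∧ (primeImplicantGraph φ).Reachable ⟨u, hu⟩ ⟨w₁, h₁⟩} with hBad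
  set A : Set (Fin n → ℝ) := ⋃ q ∈ Good, implicantCube q.1 q.2 with hA
  set B : Set (Fin n → ℝ) := ⋃ q ∈ Bad, implicantCube q.1 q.2 with hB
  have hAclosed : IsClosed A := (Set.toFinite Good).isClosed_biUnion fun q _ => cube_closed _ _
  have hBclosed : IsClosed B := (Set.toFinite Bad).isClosed_biUnion fun q _ => cube_closed _ _
  have hcover : cubicalSet φ ⊆ A ∪ B := by
    intro μ hμ
    simp only [cubicalSet, Set.mem_iUnion] at hμ
    obtain ⟨D, a, hp, hμ⟩ := hμ
    by_cases hq : (D, a) ∈ Good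
    · exact Or.inl (Set.mem_biUnion hq (show μ ∈ implicantCube (D,a).1 (D,a).2 from hμ))
    · refine Or.inr (Set.mem_biUnion (show (D,a) ∈ Bad from ⟨hp, fun hx => hq ⟨hp, hx⟩⟩)
        (show μ ∈ implicantCube (D,a).1 (D,a).2 from hμ))
  have hdisj : Disjoint A B := by
    rw [Set.disjoint_left]
    rintro μ hμA hμB
    simp only [hA, hB, Set.mem_iUnion] at hμA hμB
    obtain ⟨⟨D, a⟩, ⟨hpD, u, hu, hcu, hru⟩, hcubeD⟩ := hμA
    obtain ⟨⟨E, b⟩, ⟨hpE, hnot⟩, hcubeE⟩ := hμB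
    apply hnot
    -- construct a common covered world
    set v : World n := fun i => if i ∈ D then a i else if i ∈ E then b i else false with hv
    have hagree : ∀ i ∈ D, i ∈ E → a i = b i := by
      intro i hiD hiE
      have e1 := hcubeD.2 i hiD
      have e2 := hcubeE.2 i hiE
      rw [e1] at e2
      by_cases ha : a i <;> by_cases hb : b i <;> simp [ha, hb] at e2 ⊢
    have hcvD : covers D a v := by
      intro i hi; simp [hv, hi]
    have hcvE : covers E b v := by
      intro i hi
      by_cases hiD : i ∈ D
      · simp [hv, hiD, hagree i hiD hi]
      · simp [hv, hiD, hi]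
    have hvp : φ v = true := hpD.1 v hcvD
    have hup : φ u = true := hu
    refine ⟨v, hvp, hcvE, ?_⟩
    exact (reachable_of_common_prime hpD hvp hu hcvD hcu).trans hru
  obtain ⟨U, V, hUopen, hVopen, hAU, hBV, hUV⟩ := normal_separation hAclosed hBclosed hdisj
  -- worldPoint w₁ ∈ A
  obtain ⟨D, a, hp, hc⟩ := exists_prime_covering h₁
  have hw1A : worldPoint w₁ ∈ A :=
    Set.mem_biUnion (show (D, a) ∈ Good from ⟨hp, w₁, h₁, hc, SimpleGraph.Reachable.refl _⟩)
      (show worldPoint w₁ ∈ implicantCube (D,a).1 (D,a).2 from worldPoint_mem_cube.2 hc)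
  have hw1F : worldPoint w₁ ∈ cubicalSet φ := cube_subset_cubicalSet hp (worldPoint_mem_cube.2 hc)
  have hcompU : connectedComponentIn (cubicalSet φ) (worldPoint w₁) ⊆ U := by
    refine IsPreconnected.subset_left_of_subset_union hUopen hVopen hUV ?_ ?_
      isPreconnected_connectedComponentIn
    · exact (connectedComponentIn_subset _ _).trans (hcover.trans (Set.union_subset_union hAU hBV))
    · exact ⟨worldPoint w₁, mem_connectedComponentIn hw1F, hAU hw1A⟩
  -- worldPoint w₂ ∈ U
  obtain ⟨E, b, hpE, hcE⟩ := exists_prime_covering h₂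
  have hw2F : worldPoint w₂ ∈ cubicalSet φ :=
    cube_subset_cubicalSet hpE (worldPoint_mem_cube.2 hcE)
  have hw2U : worldPoint w₂ ∈ U := by
    apply hcompU
    rw [h]
    exact mem_connectedComponentIn hw2F
  have hw2A : worldPoint w₂ ∈ A := by
    rcases hcover hw2F with hin | hin
    · exact hin
    · exact absurd (hBV hin) (by intro hV; exact (Set.disjoint_left.1 hUV hw2U) hV)
  simp only [hA, Set.mem_iUnion] at hw2A
  obtain ⟨⟨D', a'⟩, ⟨hp', u, hu, hcu, hru⟩, hcube'⟩ := hw2A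
  have hcv2 : covers D' a' w₂ := worldPoint_mem_cube.1 hcube'
  exact ((reachable_of_common_prime hp' h₂ hu hcv2 hcu).trans hru).symm

end Aux2

/-- Connectedness: two possible worlds lie in the same connected component
of `C_φ` iff they lie in the same connected component of the prime implicant graph; in
particular `C_φ` is connected iff the graph is connected. -/
theorem stmt6 (n : ℕ) (hn : 1 ≤ n) (φ : World n → Bool) (hφ : ∃ w, φ w = true) :
    (∀ (w₁ w₂ : World n) (h₁ : φ w₁ = true) (h₂ : φ w₂ = true),
      connectedComponentIn (cubicalSet φ) (worldPoint w₁) =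
        connectedComponentIn (cubicalSet φ) (worldPoint w₂) ↔
      (primeImplicantGraph φ).Reachable ⟨w₁, h₁⟩ ⟨w₂, h₂⟩) ∧
    (IsConnected (cubicalSet φ) ↔ (primeImplicantGraph φ).Connected) := by
  have part1 : ∀ (w₁ w₂ : World n) (h₁ : φ w₁ = true) (h₂ : φ w₂ = true),
      connectedComponentIn (cubicalSet φ) (worldPoint w₁) =
        connectedComponentIn (cubicalSet φ) (worldPoint w₂) ↔
      (primeImplicantGraph φ).Reachable ⟨w₁, h₁⟩ ⟨w₂, h₂⟩ := by
    intro w₁ w₂ h₁ h₂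
    exact ⟨reachable_of_comp_eq h₁ h₂, comp_eq_of_reachable⟩
  have hmemF : ∀ (w : World n) (h : φ w = true), worldPoint w ∈ cubicalSet φ := by
    intro w h
    obtain ⟨D, a, hp, hc⟩ := exists_prime_covering h
    exact cube_subset_cubicalSet hp (worldPoint_mem_cube.2 hc)
  obtain ⟨w₀, h₀⟩ := hφ
  refine ⟨part1, ?_, ?_⟩
  · intro hconn
    rw [SimpleGraph.connected_iff]
    refine ⟨fun v₁ v₂ => ?_, ⟨⟨w₀, h₀⟩⟩⟩
    apply (part1 v₁.1 v₂.1 v₁.2 v₂.2).1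
    have hsub := hconn.isPreconnected.subset_connectedComponentIn
      (hmemF v₁.1 v₁.2) subset_rfl
    exact connectedComponentIn_eq (hsub (hmemF v₂.1 v₂.2))
  · intro hg
    have key : cubicalSet φ ⊆ connectedComponentIn (cubicalSet φ) (worldPoint w₀) := by
      intro μ hμ
      simp only [cubicalSet, Set.mem_iUnion] at hμ
      obtain ⟨D, a, hp, hμ⟩ := hμ
      have hca : covers D a a := fun i _ => rfl
      have hap : φ a = true := hp.1 a hca
      have hμcomp : μ ∈ connectedComponentIn (cubicalSet φ) (worldPoint a) :=
        (cube_convex D a).isPreconnected.subset_connectedComponentIn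
          (worldPoint_mem_cube.2 hca) (cube_subset_cubicalSet hp) hμ
      have := (part1 a w₀ hap h₀).2 (hg.preconnected ⟨a, hap⟩ ⟨w₀, h₀⟩)
      rwa [this] at hμcomp
    have hc : connectedComponentIn (cubicalSet φ) (worldPoint w₀) = cubicalSet φ :=
      Set.Subset.antisymm (connectedComponentIn_subset _ _) key
    rw [← hc]
    exact isConnected_connectedComponentIn_iff.2 (hmemF w₀ h₀)
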